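/- In the dcpo L, if D is a directed subset whose supremum lies in Σ, then D ∩ Σ is directed, cofinal in D, and ⋁(D ∩ Σ) = ⋁D. -/
import Mathlib


/-- Nonempty finite sequences of positive naturals. -/
abbrev FinSeq := {l : List ℕ+ // l ≠ []}

/-- `Sig` : nonempty finite or countably infinite sequences of positive naturals. -/
abbrev Sig := FinSeq ⊕ (ℕ → ℕ+)

/-- The substring (prefix) order on `Sig`. -/
def sigLE : Sig → Sig → Prop
  | Sum.inl a, Sum.inl b => a.val <+: b.val
  | Sum.inl a, Sum.inr f => ∀ i : Fin a.val.length, a.val.get i = f i.val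
  | Sum.inr f, Sum.inr g => f = g
  | Sum.inr _, Sum.inl _ => False

/-- A subset `D` is directed w.r.t. relation `r`. -/
def DirectedSet {A : Type _} (r : A → A → Prop) (D : Set A) : Prop :=
  D.Nonempty ∧ ∀ a ∈ D, ∀ b ∈ D, ∃ c ∈ D, r a c ∧ r b c

/-- `s` is the supremum (least upper bound) of `D` w.r.t. `r`. -/
def IsSupOf {A : Type _} (r : A → A → Prop) (D : Set A) (s : A) : Prop :=
  (∀ a ∈ D, r a s) ∧ ∀ u, (∀ a ∈ D, r a u) → r s u

/-- `c` is a compact element w.r.t. `r`. -/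
def IsCompactEl {A : Type _} (r : A → A → Prop) (c : A) : Prop :=
  ∀ D s, DirectedSet r D → IsSupOf r D s → r c s → ∃ d ∈ D, r c d

/-- `x` is maximal w.r.t. `r`. -/
def IsMaximalEl {A : Type _} (r : A → A → Prop) (x : A) : Prop :=
  ∀ y, r x y → y = x

/-- `U` is Scott open w.r.t. `r`. -/
def ScottOpen {A : Type _} (r : A → A → Prop) (U : Set A) : Prop :=
  (∀ x ∈ U, ∀ y, r x y → y ∈ U) ∧
  ∀ D s, DirectedSet r D → IsSupOf r D s → s ∈ U → ∃ d ∈ D, d ∈ U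

/-- The poset `X`: pairs `x_{m,n}` with `m ∈ ℕ₊`, `n ∈ ℕ₊ ∪ {ω}` (`ω = ⊤`). -/
abbrev XP := ℕ+ × WithTop ℕ+

/-- Order on `X`: `x_{m₁,n₁} ≤ x_{m₂,n₂}` iff `m₁ = m₂` and `n₁ ≤ n₂`. -/
def xLE : XP → XP → Prop := fun a b => a.1 = b.1 ∧ a.2 ≤ b.2

/-- The carrier of `L = X ∪ Σ ∪ Σ*`. -/
abbrev LP := XP ⊕ (Sig ⊕ Sig)

def toX (p : XP) : LP := Sum.inl p
/-- The copy `Σ` inside `L`. -/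
def toS (a : Sig) : LP := Sum.inr (Sum.inl a)
/-- The copy `Σ*` inside `L`. -/
def toS' (a : Sig) : LP := Sum.inr (Sum.inr a)

/-- Underlying sequence of an element of `Σ ∪ Σ*`. -/
def sigOf : Sig ⊕ Sig → Sig := Sum.elim id id

/-- `entryGE v k m` : the length of `v` is `≥ k+1` and its `(k+1)`-th entry is `≥ m`
(0-based index `k`). -/
def entryGE : Sig → ℕ → ℕ+ → Prop
  | Sum.inl l, k, m => ∃ h : k < l.val.length, m ≤ l.val.get ⟨k, h⟩
  | Sum.inr f, k, m => m ≤ f k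

/-- The order on `L`. -/
def lLE : LP → LP → Prop
  | Sum.inl x, Sum.inl y => xLE x y
  | Sum.inl x, Sum.inr w =>
      ∃ m : ℕ+, x.2 = (m : WithTop ℕ+) ∧ entryGE (sigOf w) x.1.natPred m
  | Sum.inr (Sum.inl a), Sum.inr w => sigLE a (sigOf w)
  | Sum.inr (Sum.inr a), Sum.inr (Sum.inr b) => sigLE a b
  | Sum.inr (Sum.inr _), Sum.inr (Sum.inl _) => False
  | Sum.inr _, Sum.inl _ => False

lemma sigLE_refl (a : Sig) : sigLE a a := by
  cases a with
  | inl l => exact List.prefix_refl _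
  | inr f => rfl

lemma sigLE_trans {a b c : Sig} (h1 : sigLE a b) (h2 : sigLE b c) : sigLE a c := by
  cases a with
  | inl l =>
    cases b with
    | inl l' =>
      cases c with
      | inl l'' => exact h1.trans h2
      | inr f =>
        intro i
        have hi : (i : ℕ) < l'.val.length := lt_of_lt_of_le i.2 h1.length_le
        have h3 := h2 ⟨i, hi⟩
        simp only [List.get_eq_getElem] at h3 ⊢
        rw [h1.getElem i.2]
        exact h3
    | inr f =>
      cases c with
      | inl _ => exact h2.elim
      | inr g =>
        have : f = g := h2
        subst this
        exact h1
  | inr f =>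
    cases b with
    | inl _ => exact h1.elim
    | inr g =>
      have : f = g := h1
      subst this
      exact h2

lemma entryGE_mono {b w : Sig} {k : ℕ} {m : ℕ+} (h : sigLE b w) (he : entryGE b k m) :
    entryGE w k m := by
  cases b with
  | inl l =>
    obtain ⟨hk, hm⟩ := he
    cases w with
    | inl l' =>
      refine ⟨lt_of_lt_of_le hk h.length_le, ?_⟩
      simp only [List.get_eq_getElem] at hm ⊢
      rw [← h.getElem hk]
      exact hm
    | inr f =>
      have h3 := h ⟨k, hk⟩
      simp only [List.get_eq_getElem] at h3 hm
      exact le_of_le_of_eq hm h3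
  | inr f =>
    cases w with
    | inl _ => exact h.elim
    | inr g =>
      have : f = g := h
      subst this
      exact he

lemma lLE_trans_toS {d u : LP} {b : Sig} (h1 : lLE d (toS b)) (h2 : lLE (toS b) u) :
    lLE d u := by
  cases u with
  | inl _ => exact h2.elim
  | inr w =>
    have h2' : sigLE b (sigOf w) := h2
    cases d with
    | inl x =>
      obtain ⟨m, hm, he⟩ := h1
      exact ⟨m, hm, entryGE_mono h2' he⟩
    | inr v =>
      cases v with
      | inl a => exact sigLE_trans h1 h2'
      | inr a => exact h1.elim

theorem stmt15 (D : Set LP) (s : LP) (hD : DirectedSet lLE D)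
    (hs : IsSupOf lLE D s) (hmem : ∃ a : Sig, s = toS a) :
    DirectedSet lLE (D ∩ {u | ∃ a : Sig, u = toS a}) ∧
    (∀ d ∈ D, ∃ e ∈ D ∩ {u | ∃ a : Sig, u = toS a}, lLE d e) ∧
    IsSupOf lLE (D ∩ {u | ∃ a : Sig, u = toS a}) s := by
  obtain ⟨a, rfl⟩ := hmem
  -- Step 1: every element of D is in X or Σ
  have hXS : ∀ d ∈ D, (∃ x : XP, d = Sum.inl x) ∨ (∃ b : Sig, d = toS b) := by
    intro d hd
    have h := hs.1 d hd
    cases d with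
    | inl x => exact Or.inl ⟨x, rfl⟩
    | inr v =>
      cases v with
      | inl b => exact Or.inr ⟨b, rfl⟩
      | inr b => exact h.elim
  -- Step 2: D ∩ Σ is nonempty
  have hne : ∃ e ∈ D, ∃ b : Sig, e = toS b := by
    by_contra h
    push_neg at h
    have hX : ∀ d ∈ D, ∃ x : XP, d = Sum.inl x := by
      intro d hd
      rcases hXS d hd with h' | ⟨b, rfl⟩
      · exact h'
      · exact absurd rfl (h _ hd b)
    obtain ⟨d₀, hd₀⟩ := hD.1
    obtain ⟨x₀, rfl⟩ := hX d₀ hd₀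
    have hub : ∀ d ∈ D, lLE d (toX (x₀.1, ⊤)) := by
      intro d hd
      obtain ⟨x, rfl⟩ := hX d hd
      obtain ⟨c, hc, h1, h2⟩ := hD.2 _ hd _ hd₀
      obtain ⟨y, rfl⟩ := hX c hc
      have h1' : xLE x y := h1
      have h2' : xLE x₀ y := h2
      exact ⟨h1'.1.trans h2'.1.symm, le_top⟩
    exact (hs.2 _ hub).elim
  obtain ⟨e₀, he₀, b₀, rfl⟩ := hne
  -- Step 3: cofinality
  have hcof : ∀ d ∈ D, ∃ e ∈ D ∩ {u | ∃ a : Sig, u = toS a}, lLE d e := by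
    intro d hd
    obtain ⟨c, hc, h1, h2⟩ := hD.2 _ hd _ he₀
    rcases hXS c hc with ⟨x, rfl⟩ | ⟨b, rfl⟩
    · exact h2.elim
    · exact ⟨toS b, ⟨hc, b, rfl⟩, h1⟩
  refine ⟨⟨⟨toS b₀, he₀, b₀, rfl⟩, ?_⟩, hcof, ?_, ?_⟩
  · -- directedness
    rintro p ⟨hp, bp, rfl⟩ q ⟨hq, bq, rfl⟩
    obtain ⟨c, hc, h1, h2⟩ := hD.2 _ hp _ hq
    rcases hXS c hc with ⟨x, rfl⟩ | ⟨bc, rfl⟩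
    · exact h1.elim
    · exact ⟨toS bc, ⟨hc, bc, rfl⟩, h1, h2⟩
  · exact fun e he => hs.1 e he.1
  · intro u hu
    refine hs.2 u ?_
    intro d hd
    obtain ⟨e, ⟨heD, b, rfl⟩, h1⟩ := hcof d hd
    exact lLE_trans_toS h1 (hu _ ⟨heD, b, rfl⟩)
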